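/- For every real μ > 0, the quotient Ψ_μ(θ)/|θ|^((s+1)/s) tends to (s/(s+1))·μ^(−1/s) as θ → 0 with θ ≠ 0. -/

import Mathlib

open Real Filter

noncomputable def g (s q μ ζ : ℝ) : ℝ := μ * |ζ| ^ (s - 1) * ζ + |ζ| ^ (q - 1) * ζ

lemma opow_neg (p x : ℝ) : |(-x)| ^ (p - 1) * (-x) = -(|x| ^ (p - 1) * x) := by
  rw [abs_neg]; ring

lemma opow_strictMono {p : ℝ} (hp : 0 < p) : StrictMono fun x : ℝ => |x| ^ (p - 1) * x := by
  have key : ∀ a b : ℝ, 0 ≤ a → a < b → |a| ^ (p - 1) * a < |b| ^ (p - 1) * b := by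
    intro a b ha hab
    have hb : 0 < b := lt_of_le_of_lt ha hab
    have hbv : |b| ^ (p - 1) * b = b ^ p := by
      rw [abs_of_pos hb, ← Real.rpow_add_one hb.ne']; ring_nf
    rcases eq_or_lt_of_le ha with h0 | ha'
    · rw [← h0]
      simpa [hbv] using Real.rpow_pos_of_pos hb p
    · have hav : |a| ^ (p - 1) * a = a ^ p := by
        rw [abs_of_pos ha', ← Real.rpow_add_one ha'.ne']; ring_nf
      rw [hav, hbv]
      exact Real.rpow_lt_rpow ha hab hp
  intro a b hab
  dsimp only
  rcases le_or_gt 0 a with ha | ha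
  · exact key a b ha hab
  · rcases le_or_gt b 0 with hb | hb
    · have := key (-b) (-a) (neg_nonneg.mpr hb) (by linarith)
      rw [opow_neg, opow_neg] at this
      linarith
    · have h1 : |a| ^ (p - 1) * a < 0 := by
        have : 0 < |a| ^ (p - 1) := Real.rpow_pos_of_pos (abs_pos.mpr ha.ne) _
        exact mul_neg_of_pos_of_neg this ha
      have h2 : 0 < |b| ^ (p - 1) * b :=
        mul_pos (Real.rpow_pos_of_pos (abs_pos.mpr hb.ne') _) hb
      linarith

theorem stmt_9 (s q : ℝ) (hs : 0 < s) (hsq : s < q) (μ : ℝ) (hμ : 0 < μ)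
    (ψ : ℝ → ℝ)
    (hψ_right : ∀ θ : ℝ, g s q μ (ψ θ) = θ)
    (hψ_left : ∀ ζ : ℝ, ψ (g s q μ ζ) = ζ)
    (Ψ : ℝ → ℝ)
    (hΨ : ∀ θ : ℝ, Ψ θ = ∫ t in (0 : ℝ)..θ, ψ t) :
    Tendsto (fun θ : ℝ => Ψ θ / |θ| ^ ((s + 1) / s))
      (nhdsWithin 0 {(0 : ℝ)}ᶜ) (nhds ((s / (s + 1)) * μ ^ (-(1 / s)))) := by
  have hq : 0 < q := hs.trans hsq
  set p : ℝ := (s + 1) / s with hp_def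
  have hp1 : p - 1 = 1 / s := by rw [hp_def]; field_simp; ring
  have hp_pos : 0 < p := div_pos (by linarith) hs
  -- g is strictly monotone
  have hg0 : g s q μ 0 = 0 := by simp [g]
  have gsm : StrictMono (g s q μ) := by
    have : g s q μ = fun ζ => μ * (|ζ| ^ (s - 1) * ζ) + |ζ| ^ (q - 1) * ζ := by
      funext ζ; rw [g]; ring
    rw [this]
    exact fun a b hab => by
      have h1 := (opow_strictMono hs) hab
      have h2 := (opow_strictMono hq) hab
      dsimp only at h1 h2 ⊢
      nlinarith
  have hψ0 : ψ 0 = 0 := by have := hψ_left 0; rwa [hg0] at this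
  have ψsm : StrictMono ψ := fun a b hab =>
    gsm.lt_iff_lt.mp (by rw [hψ_right, hψ_right]; exact hab)
  have ψcont : Continuous ψ :=
    ψsm.monotone.continuous_of_surjective fun ζ => ⟨g s q μ ζ, hψ_left ζ⟩
  have ψne : ∀ θ : ℝ, θ ≠ 0 → ψ θ ≠ 0 := by
    intro θ hθ h
    exact hθ (by rw [← hψ_right θ, h, hg0])
  -- derivative of Ψ
  have hΨd : ∀ θ : ℝ, HasDerivAt Ψ (ψ θ) θ := by
    intro θ
    have : HasDerivAt (fun u => ∫ t in (0:ℝ)..u, ψ t) (ψ θ) θ :=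
      intervalIntegral.integral_hasDerivAt_right (ψcont.intervalIntegrable 0 θ)
        (ψcont.stronglyMeasurableAtFilter _ _) ψcont.continuousAt
    exact this.congr_of_eventuallyEq (Eventually.of_forall fun x => (hΨ x))
  -- derivative of |θ|^p off zero
  have habs_deriv : ∀ θ : ℝ, θ ≠ 0 →
      HasDerivAt (fun x : ℝ => |x| ^ p) (p * |θ| ^ (p - 2) * θ) θ := by
    intro θ hθ
    rcases lt_or_gt_of_ne hθ with hneg | hpos
    · have h1 : HasDerivAt (fun x : ℝ => (-x) ^ p) (p * (-θ) ^ (p - 1) * (-1)) θ :=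
        (Real.hasDerivAt_rpow_const (Or.inl (neg_ne_zero.mpr hθ))).comp θ (hasDerivAt_neg θ)
      have h2 : (fun x : ℝ => (-x) ^ p) =ᶠ[nhds θ] fun x : ℝ => |x| ^ p := by
        filter_upwards [Iio_mem_nhds hneg] with x hx
        rw [abs_of_neg hx]
      have h3 : p * (-θ) ^ (p - 1) * (-1) = p * |θ| ^ (p - 2) * θ := by
        rw [abs_of_neg hneg]
        have : (-θ) ^ (p - 1) = (-θ) ^ (p - 2) * (-θ) := by
          rw [← Real.rpow_add_one (neg_ne_zero.mpr hθ)]; ring_nf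
        rw [this]; ring
      exact h3 ▸ h1.congr_of_eventuallyEq h2.symm
    · have h1 : HasDerivAt (fun x : ℝ => x ^ p) (p * θ ^ (p - 1)) θ :=
        Real.hasDerivAt_rpow_const (Or.inl hθ)
      have h2 : (fun x : ℝ => x ^ p) =ᶠ[nhds θ] fun x : ℝ => |x| ^ p := by
        filter_upwards [Ioi_mem_nhds hpos] with x hx
        rw [abs_of_pos hx]
      have h3 : p * θ ^ (p - 1) = p * |θ| ^ (p - 2) * θ := by
        rw [abs_of_pos hpos]
        have : θ ^ (p - 1) = θ ^ (p - 2) * θ := by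
          rw [← Real.rpow_add_one hθ]; ring_nf
        rw [this]; ring
      exact h3 ▸ h1.congr_of_eventuallyEq h2.symm
  -- the key pointwise identity
  have key : ∀ θ : ℝ, θ ≠ 0 →
      ψ θ / (p * |θ| ^ (p - 2) * θ) = (1 / p) * (μ + |ψ θ| ^ (q - s)) ^ (-(1 / s)) := by
    intro θ hθ
    set ζ := ψ θ with hζdef
    have hζ : ζ ≠ 0 := ψne θ hθ
    set b := |ζ| with hbdef
    have hb : 0 < b := abs_pos.mpr hζ
    set c : ℝ := μ * b ^ (s - 1) + b ^ (q - 1) with hcdef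
    have hc : 0 < c :=
      add_pos (mul_pos hμ (Real.rpow_pos_of_pos hb _)) (Real.rpow_pos_of_pos hb _)
    have hθeq : θ = c * ζ := by
      rw [← hψ_right θ]; rw [g]; ring
    set A : ℝ := μ * b ^ s + b ^ q with hAdef
    have hA : 0 < A :=
      add_pos (mul_pos hμ (Real.rpow_pos_of_pos hb _)) (Real.rpow_pos_of_pos hb _)
    have hcb : c * b = A := by
      rw [hcdef, hAdef, add_mul, mul_assoc, ← Real.rpow_add_one hb.ne',
        ← Real.rpow_add_one hb.ne']
      ring_nf
    have habs : |θ| = A := by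
      rw [hθeq, abs_mul, abs_of_pos hc, ← hbdef, hcb]
    set D : ℝ := (μ + b ^ (q - s)) ^ (1 / s) with hDdef
    have hD : 0 < D := Real.rpow_pos_of_pos (by positivity) _
    have hfac : A = b ^ s * (μ + b ^ (q - s)) := by
      rw [hAdef, mul_add, ← Real.rpow_add hb]
      ring_nf
    have hA1s : A ^ (1 / s) = b * D := by
      rw [hfac, Real.mul_rpow (Real.rpow_nonneg hb.le _) (by positivity),
        ← Real.rpow_mul hb.le, mul_one_div_cancel hs.ne', Real.rpow_one]
    have hstep : |θ| ^ (p - 2) * θ = A ^ (1 / s) / b * ζ := by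
      rw [habs, hθeq]
      have h1 : A ^ (p - 2) * c = A ^ (1 / s) / b := by
        have : A ^ (1 / s) = A ^ (p - 2) * A := by
          rw [← Real.rpow_add_one hA.ne', ← hp1]; ring_nf
        rw [this]
        field_simp
        exact hcb
      calc A ^ (p - 2) * (c * ζ) = (A ^ (p - 2) * c) * ζ := by ring
        _ = A ^ (1 / s) / b * ζ := by rw [h1]
    rw [mul_assoc, hstep, hA1s]
    have : b * D / b * ζ = D * ζ := by field_simp
    rw [this]
    rw [Real.rpow_neg (by positivity), ← hDdef]
    field_simp
  -- limits
  have hne : ∀ᶠ x in nhdsWithin (0:ℝ) {(0:ℝ)}ᶜ, x ≠ 0 := by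
    filter_upwards [self_mem_nhdsWithin] with x hx using hx
  have hψtend : Tendsto ψ (nhdsWithin (0:ℝ) {(0:ℝ)}ᶜ) (nhds 0) := by
    have h := ψcont.continuousAt (x := (0:ℝ))
    rw [ContinuousAt, hψ0] at h
    exact h.mono_left nhdsWithin_le_nhds
  have t2 : Tendsto (fun θ => |ψ θ| ^ (q - s)) (nhdsWithin (0:ℝ) {(0:ℝ)}ᶜ)
      (nhds 0) := by
    have hc : ContinuousAt (fun z : ℝ => |z| ^ (q - s)) 0 :=
      (Real.continuousAt_rpow_const _ _ (Or.inr (by linarith))).comp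
        continuous_abs.continuousAt
    have := hc.tendsto.comp hψtend
    simpa [Function.comp_def, Real.zero_rpow (by linarith : q - s ≠ 0)] using this
  have t4 : Tendsto (fun θ => (1 / p) * (μ + |ψ θ| ^ (q - s)) ^ (-(1 / s)))
      (nhdsWithin (0:ℝ) {(0:ℝ)}ᶜ) (nhds ((1 / p) * μ ^ (-(1 / s)))) := by
    have hc : ContinuousAt (fun z : ℝ => z ^ (-(1 / s))) μ :=
      Real.continuousAt_rpow_const _ _ (Or.inl hμ.ne')
    exact (hc.tendsto.comp (by simpa using (tendsto_const_nhds.add t2))).const_mul _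
  have hdiv : Tendsto (fun θ => ψ θ / (p * |θ| ^ (p - 2) * θ))
      (nhdsWithin (0:ℝ) {(0:ℝ)}ᶜ) (nhds ((1 / p) * μ ^ (-(1 / s)))) := by
    refine t4.congr' ?_
    filter_upwards [hne] with θ hθ using (key θ hθ).symm
  have hΨ0 : Ψ 0 = 0 := by rw [hΨ]; exact intervalIntegral.integral_same
  have hfa : Tendsto Ψ (nhdsWithin (0:ℝ) {(0:ℝ)}ᶜ) (nhds 0) := by
    have h := (hΨd 0).continuousAt
    rw [ContinuousAt, hΨ0] at h
    exact h.mono_left nhdsWithin_le_nhds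
  have hga : Tendsto (fun x : ℝ => |x| ^ p) (nhdsWithin (0:ℝ) {(0:ℝ)}ᶜ) (nhds 0) := by
    have hc : ContinuousAt (fun z : ℝ => |z| ^ p) 0 :=
      (Real.continuousAt_rpow_const _ _ (Or.inr hp_pos.le)).comp
        continuous_abs.continuousAt
    have := hc.tendsto.mono_left (nhdsWithin_le_nhds : nhdsWithin (0:ℝ) {(0:ℝ)}ᶜ ≤ nhds 0)
    simpa [Real.zero_rpow hp_pos.ne'] using this
  have main := HasDerivAt.lhopital_zero_nhdsNE
    (f := Ψ) (f' := ψ) (g := fun x : ℝ => |x| ^ p) (g' := fun x : ℝ => p * |x| ^ (p - 2) * x)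
    (Eventually.of_forall fun x => hΨd x)
    (hne.mono fun x hx => habs_deriv x hx)
    (hne.mono fun x hx => mul_ne_zero
      (mul_ne_zero hp_pos.ne' (Real.rpow_pos_of_pos (abs_pos.mpr hx) _).ne') hx)
    hfa hga hdiv
  have hpq : (1 : ℝ) / p = s / (s + 1) := by rw [hp_def, one_div_div]
  rw [hpq] at main
  exact main
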